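/- Let D be the double-arrow space: the set ((0,1] × {0}) ∪ ([0,1) × {1}) ⊆ ℝ × {0,1}, linearly ordered lexicographically and equipped with the order topology of this linear order. Then πw(D) = ω, w(D) = 2^ℵ0, and Nt(D) = (2^ℵ0)^+; in particular, D has a base of cardinality 2^ℵ0 but has no (2^ℵ0)^op-like base. -/

import Mathlib

open Cardinal Set TopologicalSpace Filter Topology

universe u

/-- A family `B` of subsets of a space is `κ`-op-like if every member of `B`
has fewer than `κ`-many supersets in `B`. -/
def OpLike {X : Type u} (κ : Cardinal.{u}) (B : Set (Set X)) : Prop :=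
  ∀ U ∈ B, #{V ∈ B | U ⊆ V} < κ

/-- The Noetherian type of a space: the least infinite `κ` such that the space
has a `κ`-op-like base. -/
noncomputable def NoetherianType (X : Type u) [TopologicalSpace X] : Cardinal.{u} :=
  sInf {κ : Cardinal.{u} | ℵ₀ ≤ κ ∧ ∃ B : Set (Set X), IsTopologicalBasis B ∧ OpLike κ B}

/-- The weight of a space: the least infinite `κ` such that the space has
a base of cardinality at most `κ`. -/
noncomputable def Weight (X : Type u) [TopologicalSpace X] : Cardinal.{u} :=
  sInf {κ : Cardinal.{u} | ℵ₀ ≤ κ ∧ ∃ B : Set (Set X), IsTopologicalBasis B ∧ #B ≤ κ}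

/-- A π-base: a family of nonempty open sets such that every nonempty open set
contains a member of the family. -/
def IsPiBase {X : Type u} [TopologicalSpace X] (B : Set (Set X)) : Prop :=
  (∀ U ∈ B, IsOpen U ∧ U.Nonempty) ∧
    ∀ U : Set X, IsOpen U → U.Nonempty → ∃ V ∈ B, V ⊆ U

/-- The π-weight of a space: the least infinite `κ` such that the space has
a π-base of cardinality at most `κ`. -/
noncomputable def PiWeight (X : Type u) [TopologicalSpace X] : Cardinal.{u} :=
  sInf {κ : Cardinal.{u} | ℵ₀ ≤ κ ∧ ∃ B : Set (Set X), IsPiBase B ∧ #B ≤ κ}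

/-- The density of a space: the least infinite `κ` such that the space has
a dense subset of cardinality at most `κ`. -/
noncomputable def Density (X : Type u) [TopologicalSpace X] : Cardinal.{u} :=
  sInf {κ : Cardinal.{u} | ℵ₀ ≤ κ ∧ ∃ D : Set X, Dense D ∧ #D ≤ κ}

/-- A GO-space: a linearly ordered set whose topology is induced by an order
embedding into some linearly ordered topological space (a linear order with
its order topology). -/
def IsGOSpace (X : Type u) [LinearOrder X] [tX : TopologicalSpace X] : Prop :=
  ∃ (Y : Type u) (lo : LinearOrder Y) (e : X → Y),
    @StrictMono X Y _ lo.toPartialOrder.toPreorder e ∧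
    tX = TopologicalSpace.induced e (@Preorder.topology Y lo.toPartialOrder.toPreorder)

/-- A space is `μ`-compact if every open cover has a subcover of cardinality
less than `μ`. -/
def MuCompact (μ : Cardinal.{u}) (X : Type u) [TopologicalSpace X] : Prop :=
  ∀ 𝒰 : Set (Set X), (∀ U ∈ 𝒰, IsOpen U) → ⋃₀ 𝒰 = Set.univ →
    ∃ 𝒱 ⊆ 𝒰, #𝒱 < μ ∧ ⋃₀ 𝒱 = Set.univ

/-- A cardinal is weakly inaccessible if it is uncountable, regular, and
a limit cardinal. -/
def IsWeaklyInaccessible (κ : Cardinal.{u}) : Prop :=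
  ℵ₀ < κ ∧ κ.IsRegular ∧ ∀ μ < κ, Order.succ μ < κ

/-- The double-arrow space: `((0,1] × {0}) ∪ ([0,1) × {1})`, ordered
lexicographically (with `false < true` playing the role of `0 < 1`). -/
def DoubleArrow : Type :=
  {p : ℝ ×ₗ Bool //
    (0 < (ofLex p).1 ∧ (ofLex p).1 ≤ 1 ∧ (ofLex p).2 = false) ∨
    (0 ≤ (ofLex p).1 ∧ (ofLex p).1 < 1 ∧ (ofLex p).2 = true)}

noncomputable instance : LinearOrder DoubleArrow := by unfold DoubleArrow; infer_instance

/-- The double-arrow space carries the order topology of its lexicographic order. -/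
noncomputable instance : TopologicalSpace DoubleArrow := Preorder.topology DoubleArrow

instance : OrderTopology DoubleArrow := ⟨rfl⟩

namespace DA
def xc (p : DoubleArrow) : ℝ := (ofLex p.val).1
def bc (p : DoubleArrow) : Bool := (ofLex p.val).2
lemma mem_cases (p : DoubleArrow) :
    (0 < xc p ∧ xc p ≤ 1 ∧ bc p = false) ∨ (0 ≤ xc p ∧ xc p < 1 ∧ bc p = true) := p.property
lemma xc_nonneg (p : DoubleArrow) : 0 ≤ xc p := by
  rcases mem_cases p with h | h
  · exact h.1.le
  · exact h.1
lemma xc_le_one (p : DoubleArrow) : xc p ≤ 1 := by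
  rcases mem_cases p with h | h
  · exact h.2.1
  · exact h.2.1.le
def mkF (x : ℝ) (h1 : 0 < x) (h2 : x ≤ 1) : DoubleArrow := ⟨toLex (x,false), Or.inl ⟨h1,h2,rfl⟩⟩
def mkT (x : ℝ) (h1 : 0 ≤ x) (h2 : x < 1) : DoubleArrow := ⟨toLex (x,true), Or.inr ⟨h1,h2,rfl⟩⟩
@[simp] lemma xc_mkF (x h1 h2) : xc (mkF x h1 h2) = x := rfl
@[simp] lemma bc_mkF (x h1 h2) : bc (mkF x h1 h2) = false := rfl
@[simp] lemma xc_mkT (x h1 h2) : xc (mkT x h1 h2) = x := rfl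
@[simp] lemma bc_mkT (x h1 h2) : bc (mkT x h1 h2) = true := rfl

lemma lt_iff {p q : DoubleArrow} :
    p < q ↔ xc p < xc q ∨ (xc p = xc q ∧ bc p = false ∧ bc q = true) := by
  have h1 : p < q ↔ p.val < q.val := Subtype.coe_lt_coe.symm
  rw [h1]
  rw [show p.val < q.val ↔ _ from Prod.Lex.lt_iff (x := p.val) (y := q.val)]
  simp [xc, bc, Bool.lt_iff]
lemma le_iff {p q : DoubleArrow} :
    p ≤ q ↔ xc p < xc q ∨ (xc p = xc q ∧ (bc p = false ∨ bc q = true)) := by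
  have h1 : p ≤ q ↔ p.val ≤ q.val := Subtype.coe_le_coe.symm
  rw [h1]
  rw [show p.val ≤ q.val ↔ _ from Prod.Lex.le_iff (x := p.val) (y := q.val)]
  constructor
  · rintro (h | ⟨h, h2⟩)
    · exact Or.inl h
    · refine Or.inr ⟨h, ?_⟩
      rcases Bool.le_iff_imp.mp h2 with _
      cases hb : bc p <;> cases hb' : bc q <;> simp_all [xc, bc]
  · rintro (h | ⟨h, h2⟩)
    · exact Or.inl h
    · refine Or.inr ⟨h, ?_⟩
      rcases h2 with h2 | h2 <;> simp [xc, bc] at h2 ⊢ <;> simp [h2]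
end DA


section Generic
variable {X : Type} [LinearOrder X] [TopologicalSpace X] [OrderTopology X]

/-- The intervals (plus `univ`) form a basis of the order topology. -/
lemma basis_intervals :
    IsTopologicalBasis (insert Set.univ
      (range Iio ∪ range Ioi ∪ range (fun p : X × X => Ioo p.1 p.2))) := by
  refine isTopologicalBasis_of_isOpen_of_nhds ?_ ?_
  · rintro s (rfl | ((⟨a, rfl⟩ | ⟨a, rfl⟩) | ⟨p, rfl⟩))
    · exact isOpen_univ
    · exact isOpen_Iio
    · exact isOpen_Ioi
    · exact isOpen_Ioo
  · intro a u hau hu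
    have hmem : u ∈ 𝓝 a := hu.mem_nhds hau
    by_cases hl : ∃ l, l < a <;> by_cases hup : ∃ v, a < v
    · obtain ⟨l, v, hav, hsub⟩ := (mem_nhds_iff_exists_Ioo_subset' hl hup).1 hmem
      exact ⟨Ioo l v, Or.inr (Or.inr ⟨(l, v), rfl⟩), hav, hsub⟩
    · obtain ⟨l, hla, hsub⟩ := exists_Ioc_subset_of_mem_nhds hmem hl
      refine ⟨Ioi l, Or.inr (Or.inl (Or.inr ⟨l, rfl⟩)), hla, fun x hx => hsub ⟨hx, ?_⟩⟩
      exact not_lt.1 fun h => hup ⟨x, h⟩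
    · obtain ⟨v, hav, hsub⟩ := exists_Ico_subset_of_mem_nhds hmem hup
      refine ⟨Iio v, Or.inr (Or.inl (Or.inl ⟨v, rfl⟩)), hav, fun x hx => hsub ⟨?_, hx⟩⟩
      exact not_lt.1 fun h => hl ⟨x, h⟩
    · refine ⟨Set.univ, Or.inl rfl, mem_univ _, fun x _ => ?_⟩
      have : x = a := le_antisymm (not_lt.1 fun h => hup ⟨x, h⟩) (not_lt.1 fun h => hl ⟨x, h⟩)
      exact this ▸ hau

lemma mk_basis_intervals_le (h : #X ≤ 𝔠) :
    #(insert Set.univ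
      (range Iio ∪ range Ioi ∪ range (fun p : X × X => Ioo p.1 p.2)) : Set (Set X)) ≤ 𝔠 := by
  have h2 : #(X × X) ≤ 𝔠 := by
    rw [mk_prod]; simp only [lift_id]
    exact (mul_le_mul' h h).trans (mul_eq_self aleph0_le_continuum).le
  refine (mk_insert_le).trans ?_
  have hr1 : #(range (Iio : X → Set X)) ≤ 𝔠 := mk_range_le.trans h
  have hr2 : #(range (Ioi : X → Set X)) ≤ 𝔠 := mk_range_le.trans h
  have hr3 : #(range (fun p : X × X => Ioo p.1 p.2)) ≤ 𝔠 := mk_range_le.trans h2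
  have hu : #(range Iio ∪ range Ioi ∪ range (fun p : X × X => Ioo p.1 p.2) : Set (Set X)) ≤ 𝔠 := by
    refine (mk_union_le _ _).trans ?_
    refine (add_le_add ((mk_union_le _ _).trans (add_le_add hr1 hr2)) hr3).trans ?_
    simp [add_eq_self aleph0_le_continuum]
  refine (add_le_add hu le_rfl).trans ?_
  have h1 : (1 : Cardinal) ≤ 𝔠 := le_trans (by norm_num) aleph0_le_continuum
  exact (add_le_add le_rfl h1).trans (le_of_eq (add_eq_self aleph0_le_continuum))
end Generic

namespace DA
open Cardinal Set TopologicalSpace Filter Topology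

lemma eq_iff {p q : DoubleArrow} : p = q ↔ xc p = xc q ∧ bc p = bc q := by
  constructor
  · rintro rfl; exact ⟨rfl, rfl⟩
  · rintro ⟨h1, h2⟩
    apply Subtype.ext
    have : ofLex p.val = ofLex q.val := Prod.ext h1 h2
    exact this
lemma mk_DA_le : #DoubleArrow ≤ 𝔠 := by
  refine (mk_subtype_le _).trans ?_
  have : #(ℝ ×ₗ Bool) = #(ℝ × Bool) := mk_congr (toLex : (ℝ × Bool) ≃ _).symm
  rw [this, mk_prod, lift_id, lift_id, mk_real, mk_bool]
  exact (mul_le_mul' le_rfl (by exact_mod_cast nat_lt_continuum 2 |>.le)).trans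
    (mul_eq_self aleph0_le_continuum).le
end DA

namespace DA
/-- total rational point constructor -/
noncomputable def pF (q : ℚ) : DoubleArrow :=
  if h : 0 < (q:ℝ) ∧ (q:ℝ) ≤ 1 then mkF q h.1 h.2 else mkF 1 one_pos le_rfl

lemma pF_eq (q : ℚ) (h1 : 0 < (q:ℝ)) (h2 : (q:ℝ) ≤ 1) : pF q = mkF q h1 h2 := by
  rw [pF, dif_pos ⟨h1, h2⟩]

/-- the countable π-base -/
def pB : Set (Set DoubleArrow) :=
  {S | ∃ q r : ℚ, 0 < (q:ℝ) ∧ (q:ℝ) < r ∧ (r:ℝ) ≤ 1 ∧ S = Ioo (pF q) (pF r)}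

lemma mk_pB_le : #pB ≤ ℵ₀ := by
  have hsub : pB ⊆ range (fun qr : ℚ × ℚ => Ioo (pF qr.1) (pF qr.2)) := by
    rintro S ⟨q, r, _, _, _, rfl⟩
    exact ⟨(q, r), rfl⟩
  exact (mk_le_mk_of_subset hsub).trans (mk_range_le.trans (by exact mk_le_aleph0))

lemma lt_of_xc_lt {p q : DoubleArrow} (h : xc p < xc q) : p < q := lt_iff.2 (Or.inl h)

lemma xc_le_of_le {p q : DoubleArrow} (h : p ≤ q) : xc p ≤ xc q := by
  rcases le_iff.1 h with h | ⟨h, _⟩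
  · exact h.le
  · exact h.le

/-- key lemma producing a π-base element inside a coordinate-strip -/
lemma key_strip {U : Set DoubleArrow} {a b : ℝ} (ha : 0 ≤ a) (hb : b ≤ 1) (hab : a < b)
    (h : ∀ p : DoubleArrow, a < xc p → xc p < b → p ∈ U) : ∃ S ∈ pB, S ⊆ U := by
  obtain ⟨q, haq, hqb⟩ := exists_rat_btwn hab
  obtain ⟨r, hqr, hrb⟩ := exists_rat_btwn hqb
  have hq0 : 0 < (q:ℝ) := lt_of_le_of_lt ha haq
  have hq1 : (q:ℝ) ≤ 1 := le_of_lt (lt_of_lt_of_le (lt_trans hqr hrb) hb)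
  have hr0 : 0 < (r:ℝ) := lt_trans hq0 hqr
  have hr1 : (r:ℝ) ≤ 1 := le_of_lt (lt_of_lt_of_le hrb hb)
  refine ⟨Ioo (pF q) (pF r), ⟨q, r, hq0, hqr, hr1, rfl⟩, ?_⟩
  rintro p ⟨h1, h2⟩
  rw [pF_eq q hq0 hq1] at h1
  rw [pF_eq r hr0 hr1] at h2
  refine h p ?_ ?_
  · have : (q:ℝ) ≤ xc p := by simpa using xc_le_of_le h1.le
    exact lt_of_lt_of_le haq this
  · rcases lt_iff.1 h2 with h | ⟨h, _, hc⟩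
    · simp at h; exact lt_trans h hrb
    · simp at hc

lemma pB_mem_nonempty {S : Set DoubleArrow} (hS : S ∈ pB) : IsOpen S ∧ S.Nonempty := by
  obtain ⟨q, r, hq0, hqr, hr1, rfl⟩ := hS
  have hq1 : (q:ℝ) ≤ 1 := le_of_lt (lt_of_lt_of_le hqr hr1)
  have hr0 : 0 < (r:ℝ) := lt_trans hq0 hqr
  refine ⟨isOpen_Ioo, ⟨mkT q hq0.le (lt_of_lt_of_le hqr hr1), ?_, ?_⟩⟩
  · rw [pF_eq q hq0 hq1]; exact lt_iff.2 (Or.inr (by simp))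
  · rw [pF_eq r hr0 hr1]; exact lt_of_xc_lt (by simpa using hqr)

lemma isPiBase_pB : (∀ U ∈ pB, IsOpen U ∧ U.Nonempty) ∧
    ∀ U : Set DoubleArrow, IsOpen U → U.Nonempty → ∃ V ∈ pB, V ⊆ U := by
  refine ⟨fun U hU => pB_mem_nonempty hU, fun U hU ⟨z, hz⟩ => ?_⟩
  have hmem : U ∈ 𝓝 z := hU.mem_nhds hz
  by_cases hl : ∃ l, l < z <;> by_cases hup : ∃ v, z < v
  · obtain ⟨l, v, hzv, hsub⟩ := (mem_nhds_iff_exists_Ioo_subset' hl hup).1 hmem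
    cases hbz : bc z with
    | true =>
      have hv : xc z < xc v := by
        rcases lt_iff.1 hzv.2 with h | ⟨_, h, _⟩
        · exact h
        · rw [hbz] at h; exact absurd h (by simp)
      refine key_strip (xc_nonneg z) (xc_le_one v) hv fun p h1 h2 => hsub ⟨?_, lt_of_xc_lt h2⟩
      have : xc l ≤ xc z := by
        rcases lt_iff.1 hzv.1 with h | ⟨h, _⟩
        · exact h.le
        · exact h.le
      exact lt_of_xc_lt (lt_of_le_of_lt this h1)
    | false =>
      have hlz : xc l < xc z := by
        rcases lt_iff.1 hzv.1 with h | ⟨_, _, h⟩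
        · exact h
        · rw [hbz] at h; exact absurd h (by simp)
      refine key_strip (xc_nonneg l) (xc_le_one z) hlz fun p h1 h2 => hsub ⟨lt_of_xc_lt h1, ?_⟩
      exact lt_of_xc_lt (lt_of_lt_of_le h2 (xc_le_of_le hzv.2.le))
  · -- z is a maximum
    obtain ⟨l, hla, hsub⟩ := exists_Ioc_subset_of_mem_nhds hmem hl
    have hl1 : xc l < 1 := by
      rcases lt_or_eq_of_le (xc_le_one l) with h | h
      · exact h
      · exfalso
        have hbl : bc l = false := by
          rcases mem_cases l with hc | hc
          · exact hc.2.2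
          · exact absurd h (ne_of_lt hc.2.1)
        have hxz : xc z = 1 := le_antisymm (xc_le_one z) (h ▸ xc_le_of_le hla.le)
        have hbz : bc z = false := by
          rcases mem_cases z with hc | hc
          · exact hc.2.2
          · exact absurd hxz (ne_of_lt hc.2.1)
        exact absurd (eq_iff.2 ⟨h.trans hxz.symm, hbl.trans hbz.symm⟩) (ne_of_lt hla)
    refine key_strip (xc_nonneg l) le_rfl hl1 fun p h1 _ => hsub ⟨lt_of_xc_lt h1, ?_⟩
    exact not_lt.1 fun hc => hup ⟨p, hc⟩
  · -- z is a minimum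
    obtain ⟨v, hav, hsub⟩ := exists_Ico_subset_of_mem_nhds hmem hup
    have hz0 : xc z = 0 := by
      by_contra hne
      have hpos : 0 < xc z := lt_of_le_of_ne (xc_nonneg z) (Ne.symm hne)
      cases hbz : bc z with
      | true =>
        have hz1 : xc z ≤ 1 := xc_le_one z
        exact hl ⟨mkF (xc z) hpos hz1, lt_iff.2 (Or.inr (by simp [hbz]))⟩
      | false =>
        refine hl ⟨mkT (xc z / 2) (by linarith) (by linarith [xc_le_one z]), ?_⟩
        exact lt_of_xc_lt (by simp; linarith)
    have hv0 : 0 < xc v := by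
      rcases lt_iff.1 hav with h | ⟨_, hbz, _⟩
      · rw [hz0] at h; exact h
      · exfalso
        rcases mem_cases z with hc | hc
        · rw [hz0] at hc; exact absurd hc.1 (lt_irrefl 0)
        · rw [hc.2.2] at hbz; exact Bool.noConfusion hbz
    refine key_strip le_rfl (xc_le_one v) hv0 fun p h1 h2 => hsub ⟨?_, lt_of_xc_lt h2⟩
    exact not_lt.1 fun hc => hl ⟨p, hc⟩
  · exfalso
    have h01 : mkT 0 le_rfl one_pos < mkF 1 one_pos le_rfl := lt_of_xc_lt (by simp)
    have := not_lt.1 fun hc => hup ⟨mkF 1 one_pos le_rfl, hc⟩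
    have h2 := not_lt.1 fun hc => hl ⟨mkT 0 le_rfl one_pos, hc⟩
    exact absurd (lt_of_lt_of_le h01 (le_trans this h2)) (lt_irrefl _)
end DA

namespace DA
lemma weight_lower {B : Set (Set DoubleArrow)} (hB : IsTopologicalBasis B) : 𝔠 ≤ #B := by
  have hch : ∀ x : ↥(Ioo (0:ℝ) 1), ∃ V, V ∈ B ∧ mkF x.1 x.2.1 x.2.2.le ∈ V ∧
      V ⊆ Iio (mkT x.1 x.2.1.le x.2.2) := by
    rintro ⟨x, hx1, hx2⟩
    obtain ⟨V, hVB, hmem, hsub⟩ := hB.exists_subset_of_mem_open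
      (show mkF x hx1 hx2.le ∈ Iio (mkT x hx1.le hx2) from lt_iff.2 (Or.inr (by simp)))
      isOpen_Iio
    exact ⟨V, hVB, hmem, hsub⟩
  choose V hVB hVmem hVsub using hch
  have hinj : Function.Injective (fun x => (⟨V x, hVB x⟩ : ↥B)) := by
    intro x y hxy
    simp only [Subtype.mk_eq_mk] at hxy
    have h1 : mkF x.1 x.2.1 x.2.2.le < mkT y.1 y.2.1.le y.2.2 := hVsub y (hxy ▸ hVmem x)
    have h2 : mkF y.1 y.2.1 y.2.2.le < mkT x.1 x.2.1.le x.2.2 := hVsub x (hxy ▸ hVmem y)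
    have hxy1 : (x:ℝ) ≤ y := by
      rcases lt_iff.1 h1 with h | ⟨h, _⟩
      · exact le_of_lt (by simpa using h)
      · simpa using h.le
    have hxy2 : (y:ℝ) ≤ x := by
      rcases lt_iff.1 h2 with h | ⟨h, _⟩
      · exact le_of_lt (by simpa using h)
      · simpa using h.le
    exact Subtype.ext (le_antisymm hxy1 hxy2)
  calc 𝔠 = #(Ioo (0:ℝ) 1) := (mk_Ioo_real zero_lt_one).symm
  _ ≤ #B := mk_le_of_injective hinj

lemma main_lemma {B : Set (Set DoubleArrow)} (hB : IsTopologicalBasis B) :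
    ∃ W ∈ B, 𝔠 ≤ #{V | V ∈ B ∧ W ⊆ V} := by
  have step1 : ∀ x : ↥(Ioo (0:ℝ) 1), ∃ (U : Set DoubleArrow) (q : ℚ),
      U ∈ B ∧ mkT x.1 x.2.1.le x.2.2 ∈ U ∧ U ⊆ Ioi (mkF x.1 x.2.1 x.2.2.le) ∧
      (x:ℝ) < q ∧ (q:ℝ) ≤ 1 ∧ ∀ p : DoubleArrow, (x:ℝ) < xc p → xc p < q → p ∈ U := by
    rintro ⟨x, hx1, hx2⟩
    obtain ⟨U, hUB, hUmem, hUsub⟩ := hB.exists_subset_of_mem_open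
      (show mkT x hx1.le hx2 ∈ Ioi (mkF x hx1 hx2.le) from lt_iff.2 (Or.inr (by simp)))
      isOpen_Ioi
    have hnhds : U ∈ 𝓝 (mkT x hx1.le hx2) := (hB.isOpen hUB).mem_nhds hUmem
    obtain ⟨c, hc1, hc2⟩ := exists_Ico_subset_of_mem_nhds hnhds
      ⟨mkF 1 one_pos le_rfl, lt_of_xc_lt (by simpa using hx2)⟩
    have hxc : x < xc c := by
      rcases lt_iff.1 hc1 with h | ⟨_, h, _⟩
      · simpa using h
      · simp at h
    obtain ⟨q, hq1, hq2⟩ := exists_rat_btwn hxc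
    refine ⟨U, q, hUB, hUmem, hUsub, hq1, le_trans hq2.le (xc_le_one c),
      fun p hp1 hp2 => hc2 ⟨?_, ?_⟩⟩
    · exact le_iff.2 (Or.inl (by simpa using hp1))
    · exact lt_of_xc_lt (lt_trans hp2 hq2)
  choose U Q hUB hUmem hUsub hQ1 hQ2 hUprop using step1
  have stepN : ∀ x : ↥(Ioo (0:ℝ) 1), ∃ n : ℕ, (x:ℝ) < (Q x : ℝ) - 1/(n+1) := by
    intro x
    obtain ⟨n, hn⟩ := exists_nat_one_div_lt (sub_pos.2 (hQ1 x))
    exact ⟨n, by push_cast at hn ⊢; linarith⟩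
  choose N hN using stepN
  have hfiber : ∃ pr : ℚ × ℕ, 𝔠 ≤ #{x : ↥(Ioo (0:ℝ) 1) // (Q x, N x) = pr} := by
    by_contra hcon
    push_neg at hcon
    have hcof : ℵ₀ < Cardinal.continuum.ord.cof := by
      by_contra hc
      push_neg at hc
      have h1 : 𝔠 < 𝔠 ^ (Cardinal.continuum.ord.cof) := lt_power_cof aleph0_le_continuum
      have h2 : 𝔠 ^ (Cardinal.continuum.ord.cof) ≤ 𝔠 ^ ℵ₀ := power_le_power_left continuum_ne_zero hc
      rw [continuum_power_aleph0] at h2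
      exact absurd (lt_of_lt_of_le h1 h2) (lt_irrefl _)
    have hEq : #(↥(Ioo (0:ℝ) 1)) =
        Cardinal.sum fun pr : ℚ × ℕ => #{x : ↥(Ioo (0:ℝ) 1) // (Q x, N x) = pr} := by
      rw [← mk_sigma]
      exact (mk_congr (Equiv.sigmaFiberEquiv fun x => (Q x, N x))).symm
    have hsum : Cardinal.sum
        (fun pr : ℚ × ℕ => #{x : ↥(Ioo (0:ℝ) 1) // (Q x, N x) = pr}) < 𝔠 := by
      refine lt_of_le_of_lt (Cardinal.sum_le_mk_mul_iSup _) ?_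
      have hi : iSup (fun pr : ℚ × ℕ => #{x : ↥(Ioo (0:ℝ) 1) // (Q x, N x) = pr}) < 𝔠 :=
        Ordinal.iSup_lt (lt_of_le_of_lt mk_le_aleph0 hcof) hcon
      exact Cardinal.mul_lt_of_lt aleph0_le_continuum
        (lt_of_le_of_lt mk_le_aleph0 aleph0_lt_continuum) hi
    rw [mk_Ioo_real zero_lt_one] at hEq
    exact absurd (hEq ▸ hsum) (lt_irrefl _)
  obtain ⟨⟨q, n⟩, hfib⟩ := hfiber
  have hTne : Nonempty {x : ↥(Ioo (0:ℝ) 1) // (Q x, N x) = (q, n)} := by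
    by_contra h
    rw [not_nonempty_iff] at h
    rw [mk_eq_zero] at hfib
    exact continuum_ne_zero (le_zero_iff.1 hfib)
  obtain ⟨x₀⟩ := hTne
  set y : ℝ := (q:ℝ) - 1/(n+1) with hy
  have hQx₀ : Q x₀.1 = q := congrArg Prod.fst x₀.2
  have hNx₀ : N x₀.1 = n := congrArg Prod.snd x₀.2
  have hyq : y < q := by
    rw [hy]
    have : (0:ℝ) < 1/(n+1) := by positivity
    linarith
  have hx0y : (x₀.1 : ℝ) < y := by have := hN x₀.1; rwa [hQx₀, hNx₀] at this
  have hy0 : 0 < y := lt_trans x₀.1.2.1 hx0y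
  have hq1 : (q:ℝ) ≤ 1 := hQx₀ ▸ hQ2 x₀.1
  have hy1 : y < 1 := lt_of_lt_of_le hyq hq1
  have hq0 : 0 < (q:ℝ) := lt_trans hy0 hyq
  obtain ⟨W, hWB, hWmem, hWsub⟩ := hB.exists_subset_of_mem_open
    (show mkT y hy0.le hy1 ∈ Ioo (mkF y hy0 hy1.le) (mkF q hq0 hq1) from
      ⟨lt_iff.2 (Or.inr (by simp)), lt_of_xc_lt (by simpa using hyq)⟩)
    isOpen_Ioo
  refine ⟨W, hWB, ?_⟩
  have hWU : ∀ x : {x : ↥(Ioo (0:ℝ) 1) // (Q x, N x) = (q, n)}, W ⊆ U x.1 := by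
    rintro ⟨x, hx⟩ p hp
    obtain ⟨hp1, hp2⟩ := hWsub hp
    have hQx : Q x = q := congrArg Prod.fst hx
    have hNx : N x = n := congrArg Prod.snd hx
    have hxlt : (x:ℝ) < y := by have := hN x; rwa [hQx, hNx] at this
    apply hUprop x
    · have hyxc : y ≤ xc p := by
        rcases lt_iff.1 hp1 with h | ⟨h, _⟩
        · exact le_of_lt (by simpa using h)
        · simpa using h.le
      exact lt_of_lt_of_le hxlt hyxc
    · rw [hQx]
      rcases lt_iff.1 hp2 with h | ⟨_, _, h⟩
      · simpa using h
      · simp at h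
  have hinj : Function.Injective
      (fun x : {x : ↥(Ioo (0:ℝ) 1) // (Q x, N x) = (q, n)} =>
        (⟨U x.1, hUB x.1, hWU x⟩ : {V // V ∈ B ∧ W ⊆ V})) := by
    intro x y' hxy
    simp only [Subtype.mk_eq_mk] at hxy
    have h1 : mkT x.1.1 x.1.2.1.le x.1.2.2 ∈ Ioi (mkF y'.1.1 y'.1.2.1 y'.1.2.2.le) :=
      hUsub y'.1 (hxy ▸ hUmem x.1)
    have h2 : mkT y'.1.1 y'.1.2.1.le y'.1.2.2 ∈ Ioi (mkF x.1.1 x.1.2.1 x.1.2.2.le) :=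
      hUsub x.1 (hxy ▸ hUmem y'.1)
    have hle1 : (y'.1 : ℝ) ≤ x.1 := by
      rcases lt_iff.1 h1 with h | ⟨h, _⟩
      · exact le_of_lt (by simpa using h)
      · simpa using h.le
    have hle2 : (x.1 : ℝ) ≤ y'.1 := by
      rcases lt_iff.1 h2 with h | ⟨h, _⟩
      · exact le_of_lt (by simpa using h)
      · simpa using h.le
    exact Subtype.ext (Subtype.ext (le_antisymm hle2 hle1))
  calc 𝔠 ≤ #{x : ↥(Ioo (0:ℝ) 1) // (Q x, N x) = (q, n)} := hfib
  _ ≤ #{V // V ∈ B ∧ W ⊆ V} := mk_le_of_injective hinj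
  _ = #{V | V ∈ B ∧ W ⊆ V} := rfl
end DA

open DA in
/-- The double-arrow space has π-weight `ω`, weight `2^ℵ₀`, and Noetherian type
`(2^ℵ₀)⁺`; in particular it has a base of cardinality `2^ℵ₀` but no
`(2^ℵ₀)`-op-like base. -/
theorem statement1 :
    PiWeight DoubleArrow = ℵ₀ ∧
    Weight DoubleArrow = Cardinal.continuum ∧
    NoetherianType DoubleArrow = Order.succ Cardinal.continuum ∧
    (∃ B : Set (Set DoubleArrow), IsTopologicalBasis B ∧ #B ≤ Cardinal.continuum) ∧
    ¬ ∃ B : Set (Set DoubleArrow), IsTopologicalBasis B ∧ OpLike Cardinal.continuum B := by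
  have hbasis : IsTopologicalBasis (insert Set.univ
      (range Iio ∪ range Ioi ∪ range (fun p : DoubleArrow × DoubleArrow => Ioo p.1 p.2))) :=
    basis_intervals
  have hbcard : #(insert Set.univ
      (range Iio ∪ range Ioi ∪ range (fun p : DoubleArrow × DoubleArrow => Ioo p.1 p.2)) :
      Set (Set DoubleArrow)) ≤ 𝔠 := mk_basis_intervals_le mk_DA_le
  have hnoop : ¬ ∃ B : Set (Set DoubleArrow), IsTopologicalBasis B ∧ OpLike 𝔠 B := by
    rintro ⟨B, hB, hOp⟩
    obtain ⟨W, hWB, hW⟩ := main_lemma hB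
    exact absurd (lt_of_le_of_lt hW (hOp W hWB)) (lt_irrefl _)
  refine ⟨?_, ?_, ?_, ⟨_, hbasis, hbcard⟩, hnoop⟩
  · -- PiWeight
    have hmem : ℵ₀ ∈ {κ : Cardinal | ℵ₀ ≤ κ ∧
        ∃ B : Set (Set DoubleArrow), IsPiBase B ∧ #B ≤ κ} :=
      ⟨le_rfl, pB, isPiBase_pB, mk_pB_le⟩
    exact le_antisymm (csInf_le' hmem) (le_csInf ⟨_, hmem⟩ fun κ hκ => hκ.1)
  · -- Weight
    have hmem : 𝔠 ∈ {κ : Cardinal | ℵ₀ ≤ κ ∧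
        ∃ B : Set (Set DoubleArrow), IsTopologicalBasis B ∧ #B ≤ κ} :=
      ⟨aleph0_le_continuum, _, hbasis, hbcard⟩
    refine le_antisymm (csInf_le' hmem) (le_csInf ⟨_, hmem⟩ ?_)
    rintro κ ⟨-, B, hB, hBκ⟩
    exact (weight_lower hB).trans hBκ
  · -- Noetherian type
    have hmem : Order.succ 𝔠 ∈ {κ : Cardinal | ℵ₀ ≤ κ ∧
        ∃ B : Set (Set DoubleArrow), IsTopologicalBasis B ∧ OpLike κ B} := by
      refine ⟨aleph0_le_continuum.trans (Order.le_succ _), _, hbasis, fun U _ => ?_⟩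
      exact lt_of_le_of_lt ((mk_le_mk_of_subset (sep_subset _ _)).trans hbcard)
        (Order.lt_succ _)
    refine le_antisymm (csInf_le' hmem) (le_csInf ⟨_, hmem⟩ ?_)
    rintro κ ⟨-, B, hB, hOp⟩
    refine Order.succ_le_of_lt (lt_of_not_ge fun hκ => ?_)
    obtain ⟨W, hWB, hW⟩ := main_lemma hB
    exact absurd (lt_of_lt_of_le (lt_of_le_of_lt hW (hOp W hWB)) hκ) (lt_irrefl _)
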